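/- Let κ > 0, Φ₀ ≥ 0, L > 0, d ≥ 1, with ρ̄ = Φ₀/L^d + √2 exp(−(κ/2)Φ₀²)/(L^d √(πκ)(1 + erf(Φ₀√κ/√2))) the mean of the truncated Gaussian stationary state. Then 1/L^d − L^d ρ̄ (ρ̄ − Φ₀/L^d) κ = (1/L^d) g(√(κ/2) Φ₀), where g(η) = 1 − 2 f(η)(f(η) + η) and f(η) = (1/√π) exp(−η²)/(1 + erf(η)). In particular, 1/L^d − L^d ρ̄ (ρ̄ − Φ₀/L^d) κ > 0. -/

import Mathlib

open Real MeasureTheory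

noncomputable def erf (z : ℝ) : ℝ := (2 / Real.sqrt π) * ∫ s in (0:ℝ)..z, Real.exp (-s^2)

noncomputable def f (η : ℝ) : ℝ := (1 / Real.sqrt π) * Real.exp (-η^2) / (1 + erf η)

noncomputable def g (η : ℝ) : ℝ := 1 - 2 * f η * (f η + η)

theorem polykey (x s : ℝ) (hx : 0 ≤ x) (hs : 1.772 ≤ s) :
    2 + 2*s*x*(1+x^2+x^4/2) < s^2*(1+x^2+x^4/2)^2 := by
  obtain ⟨D, hD⟩ : ∃ D : ℝ, D = 1+x^2+x^4/2 := ⟨_, rfl⟩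
  rw [← hD]
  have hDpos : 0 < D := by rw [hD]; positivity
  have h1 : 2 + 3.544*x*D < 3.139984*D^2 := by
    rw [hD]
    nlinarith [sq_nonneg (x-2/5), sq_nonneg x, sq_nonneg (x^2-1), sq_nonneg (x^3-x),
      sq_nonneg (x^2 - 2/5*x), mul_nonneg hx hx, mul_nonneg (mul_nonneg hx hx) hx,
      sq_nonneg (x^3 - 2/5*x^2), sq_nonneg (x^4 - 2/5*x^3)]
  have h3 : (s+1.772)*D - 2*x ≥ 0 := by
    rw [hD]; nlinarith [sq_nonneg (x-1), sq_nonneg x, sq_nonneg (x^2)]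
  have h2 : (s-1.772)*(D*((s+1.772)*D - 2*x)) ≥ 0 :=
    mul_nonneg (by linarith) (mul_nonneg hDpos.le h3)
  have key : s^2*D^2 - 2*s*x*D
      = 3.139984*D^2 - 3.544*x*D + (s-1.772)*(D*((s+1.772)*D-2*x)) := by ring
  linarith

theorem sqrtpi_ge : (1.772:ℝ) ≤ Real.sqrt π := by
  rw [show (1.772:ℝ) = Real.sqrt (1.772^2) by rw [Real.sqrt_sq]; norm_num]
  apply Real.sqrt_le_sqrt
  nlinarith [Real.pi_gt_d6]

theorem keylem (x : ℝ) (hx : 0 ≤ x) :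
    2 * ((1/Real.sqrt π) * Real.exp (-x^2)) * ((1/Real.sqrt π) * Real.exp (-x^2) + x) < 1 := by
  obtain ⟨s, hs⟩ : ∃ s : ℝ, s = Real.sqrt π := ⟨_, rfl⟩
  rw [← hs]
  have hs1 : (1.772:ℝ) ≤ s := hs ▸ sqrtpi_ge
  have hspos : (0:ℝ) < s := by linarith
  obtain ⟨E, hE⟩ : ∃ E : ℝ, E = Real.exp (-x^2) := ⟨_, rfl⟩
  rw [← hE]
  have hEpos : 0 < E := hE ▸ Real.exp_pos _
  obtain ⟨D, hD⟩ : ∃ D : ℝ, D = 1+x^2+x^4/2 := ⟨_, rfl⟩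
  have hDpos : 0 < D := by rw [hD]; positivity
  have hED : E * D ≤ 1 := by
    have hsum : D ≤ Real.exp (x^2) := by
      have h := Real.sum_le_exp_of_nonneg (sq_nonneg x) 3
      simp [Finset.sum_range_succ] at h
      rw [hD]; nlinarith [h]
    calc E * D ≤ E * Real.exp (x^2) := mul_le_mul_of_nonneg_left hsum hEpos.le
      _ = 1 := by rw [hE, ← Real.exp_add]; simp
  have hpoly := polykey x s hx hs1
  rw [← hD] at hpoly
  have hP : 0 < (s^2 - 2*E^2 - 2*s*x*E) * D^2 := by
    nlinarith [mul_nonneg (mul_nonneg hspos.le hx) (mul_nonneg hEpos.le hDpos.le),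
      mul_pos hEpos hDpos, mul_nonneg (mul_nonneg hspos.le hx) hDpos.le]
  have hP2 : 0 < s^2 - 2*E^2 - 2*s*x*E := by
    by_contra hc
    push_neg at hc
    nlinarith [sq_nonneg D, mul_pos hDpos hDpos]
  have heq : 2 * (1/s*E) * (1/s*E + x) = (2*E^2 + 2*s*x*E)/s^2 := by
    field_simp
  rw [heq, div_lt_one (by positivity)]
  linarith

theorem erf_nonneg' (z : ℝ) (hz : 0 ≤ z) : 0 ≤ erf z := by
  unfold erf
  apply mul_nonneg (by positivity)
  apply intervalIntegral.integral_nonneg hz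
  intro u _
  exact (Real.exp_pos _).le

theorem g_pos (η : ℝ) (hη : 0 ≤ η) : 0 < g η := by
  have herf := erf_nonneg' η hη
  have hden : (0:ℝ) < 1 + erf η := by linarith
  have hE : 0 < Real.exp (-η^2) := Real.exp_pos _
  have hsπ : (0:ℝ) < Real.sqrt π := by linarith [sqrtpi_ge]
  have hf0 : 0 ≤ f η := by unfold f; positivity
  have hfle : f η ≤ (1/Real.sqrt π) * Real.exp (-η^2) := by
    unfold f; exact div_le_self (by positivity) (by linarith)
  have hk := keylem η hη
  unfold g
  nlinarith [mul_nonneg (sub_nonneg.2 hfle)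
    (add_nonneg (add_nonneg (by positivity : (0:ℝ) ≤ (1/Real.sqrt π) * Real.exp (-η^2)) hf0) hη)]

theorem stmt12 (κ Φ₀ L : ℝ) (d : ℕ) (hκ : 0 < κ) (hΦ : 0 ≤ Φ₀) (hL : 0 < L) (hd : 1 ≤ d)
    (ρbar : ℝ)
    (hρbar : ρbar = Φ₀ / L^d +
      Real.sqrt 2 * Real.exp (-(κ/2) * Φ₀^2) /
        (L^d * Real.sqrt (π * κ) * (1 + erf (Φ₀ * Real.sqrt κ / Real.sqrt 2)))) :
    1 / L^d - L^d * ρbar * (ρbar - Φ₀ / L^d) * κ = (1 / L^d) * g (Real.sqrt (κ / 2) * Φ₀) ∧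
    0 < 1 / L^d - L^d * ρbar * (ρbar - Φ₀ / L^d) * κ := by
  have hκs : (0:ℝ) < Real.sqrt κ := Real.sqrt_pos.2 hκ
  have h2s : (0:ℝ) < Real.sqrt 2 := by positivity
  have hsπ : (0:ℝ) < Real.sqrt π := by linarith [sqrtpi_ge]
  have hA : (0:ℝ) < L^d := by positivity
  have hκ2 : Real.sqrt κ ^ 2 = κ := Real.sq_sqrt hκ.le
  have h22 : Real.sqrt 2 ^ 2 = 2 := Real.sq_sqrt (by norm_num)
  have hηeq : Real.sqrt (κ/2) * Φ₀ = Φ₀ * Real.sqrt κ / Real.sqrt 2 := by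
    rw [Real.sqrt_div hκ.le]; ring
  obtain ⟨η, hηdef⟩ : ∃ η : ℝ, η = Φ₀ * Real.sqrt κ / Real.sqrt 2 := ⟨_, rfl⟩
  have hηnn : 0 ≤ η := by rw [hηdef]; positivity
  have hexp : -(κ/2) * Φ₀^2 = -η^2 := by
    rw [hηdef, div_pow, mul_pow, hκ2, h22]; ring
  obtain ⟨F, hF⟩ : ∃ F : ℝ, F = f η := ⟨_, rfl⟩
  have hρ : ρbar = Φ₀ / L^d + (Real.sqrt 2 * F / Real.sqrt κ) / L^d := by
    rw [hρbar, Real.sqrt_mul Real.pi_pos.le, hexp, ← hηdef, hF]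
    unfold f
    have hden : (0:ℝ) < 1 + erf η := by linarith [erf_nonneg' η hηnn]
    field_simp
  obtain ⟨c, hc⟩ : ∃ c : ℝ, c = Real.sqrt 2 * F / Real.sqrt κ := ⟨_, rfl⟩
  rw [← hc] at hρ
  have hc2 : c^2 * κ = 2 * F^2 := by
    rw [hc, div_pow, mul_pow, hκ2, h22]; field_simp
  have hc1 : Φ₀ * c * κ = 2 * η * F := by
    rw [hc, hηdef]
    field_simp
    linear_combination (Φ₀*F*κ)*h22 - 2*Φ₀*F*hκ2
  have hiden : 1 / L^d - L^d * ρbar * (ρbar - Φ₀ / L^d) * κ = (1/L^d) * (1 - 2*F*(F+η)) := by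
    rw [hρ]
    field_simp
    linear_combination -hc1 - hc2
  have hgη : g (Real.sqrt (κ/2) * Φ₀) = 1 - 2*F*(F+η) := by
    rw [hηeq, ← hηdef]; unfold g; rw [hF]
  constructor
  · rw [hiden, hgη]
  · rw [hiden, ← hgη]
    have := g_pos (Real.sqrt (κ/2) * Φ₀) (by positivity)
    positivity
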